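/- Let R = ℤ[x₁,…,x_r, y₁^{±},…,y_{n−r}^{±}] and let I ⊆ R be an ideal such that R/I is ℤ-flat. Suppose the extended ideal ℚI in ℚ[x, y^{±}] is generated by a subset S ⊆ {x₁,…,x_r} of the variables. Then I contains S; and if moreover for every prime p the ideal I·𝔽_p[x, y^{±}] is also generated by a set of variables of the same cardinality as S, then I = (S), the ideal generated by S. -/

import Mathlib

noncomputable section

/-- The ring `k[x₁,…,x_r, y₁^{±},…,y_{n−r}^{±}]`, realized as the monoid algebra of
`ℕ^X × ℤ^Y` over `k`. -/
abbrev LaurRing (k : Type*) [CommRing k] (X Y : Type*) : Type _ :=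
  AddMonoidAlgebra k ((X →₀ ℕ) × (Y →₀ ℤ))

/-- The variable `x_i`. -/
def xvarK (k : Type*) [CommRing k] {X Y : Type*} (i : X) : LaurRing k X Y :=
  AddMonoidAlgebra.single (Finsupp.single i 1, (0 : Y →₀ ℤ)) (1 : k)

/-- The base-change ring map `ℤ[x, y^{±}] → k[x, y^{±}]` (e.g. `k = ℚ` or `k = 𝔽_p`). -/
def baseChange (k : Type*) [CommRing k] (X Y : Type*) :
    LaurRing ℤ X Y →ₐ[ℤ] LaurRing k X Y :=
  AddMonoidAlgebra.lift ℤ (LaurRing k X Y) ((X →₀ ℕ) × (Y →₀ ℤ))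
    (AddMonoidAlgebra.of k ((X →₀ ℕ) × (Y →₀ ℤ)))

section Aux

variable {k : Type*} [CommRing k] {X Y : Type*}

lemma baseChange_single' (a : (X →₀ ℕ) × (Y →₀ ℤ)) (b : ℤ) :
    baseChange k X Y (AddMonoidAlgebra.single a b) = AddMonoidAlgebra.single a (b : k) := by
  rw [baseChange, AddMonoidAlgebra.lift_single]
  show b • AddMonoidAlgebra.single a (1:k) = _
  rw [AddMonoidAlgebra.smul_single]
  norm_num

lemma baseChange_apply' (f : LaurRing ℤ X Y) :
    baseChange k X Y f =
      AddMonoidAlgebra.ofCoeff (Finsupp.mapRange (Int.cast : ℤ → k) (by simp) f.coeff) := by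
  induction f using AddMonoidAlgebra.induction with
  | zero => simp [map_zero]
  | single_add a b f _ _ ih =>
    rw [map_add, ih, baseChange_single']
    apply AddMonoidAlgebra.coeff_injective
    simp [Finsupp.mapRange_add]

lemma baseChange_injective' : Function.Injective (baseChange ℚ X Y) := by
  intro f g h
  rw [baseChange_apply', baseChange_apply'] at h
  exact AddMonoidAlgebra.coeff_injective
    (Finsupp.mapRange_injective _ _ Int.cast_injective (AddMonoidAlgebra.ofCoeff_injective h))

lemma support_baseChange' (f : LaurRing ℤ X Y) :
    (baseChange ℚ X Y f).coeff.support = f.coeff.support := by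
  rw [baseChange_apply']
  exact Finsupp.support_mapRange_of_injective (by simp) f.coeff Int.cast_injective

lemma baseChange_xvar' (i : X) : baseChange k X Y (xvarK ℤ i) = xvarK k i := by
  rw [xvarK, baseChange_single']
  simp [xvarK]

/-- Membership in the ideal generated by the variables in `S` is a condition on supports. -/
lemma memJ_iff (S : Finset X) (f : LaurRing k X Y) :
    f ∈ Ideal.span ((fun i => xvarK k i) '' ↑S) ↔
      ∀ a ∈ f.coeff.support, ∃ i ∈ S, a.1 i ≠ 0 := by
  classical
  constructor
  · intro hf
    induction hf using Submodule.span_induction with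
    | mem g hg =>
      obtain ⟨i, hi, rfl⟩ := hg
      intro a ha
      have := Finsupp.support_single_subset ha
      simp only [Finset.mem_singleton] at this
      subst this
      exact ⟨i, hi, by simp⟩
    | zero => simp
    | add g h _ _ ihg ihh =>
      intro a ha
      rcases Finset.mem_union.1 (Finsupp.support_add ha) with h' | h'
      · exact ihg a h'
      · exact ihh a h'
    | smul r g _ ihg =>
      intro a ha
      have h2 := AddMonoidAlgebra.support_coeff_mul_subset r g ha
      rw [Finset.mem_add] at h2
      obtain ⟨b, _, c, hc, rfl⟩ := h2
      obtain ⟨i, hi, hne⟩ := ihg c hc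
      refine ⟨i, hi, ?_⟩
      show (b.1 + c.1) i ≠ 0
      rw [Finsupp.add_apply]
      exact fun h => hne (Nat.eq_zero_of_add_eq_zero_left h)
  · intro hf
    induction f using AddMonoidAlgebra.induction with
    | zero => exact Ideal.zero_mem _
    | single_add a b f haf hb ih =>
      have hsupp : (AddMonoidAlgebra.single a b + f).coeff.support = insert a f.coeff.support := by
        rw [AddMonoidAlgebra.coeff_add, AddMonoidAlgebra.coeff_single, Finsupp.support_add_eq, Finsupp.support_single_ne_zero a hb]
        · rw [Finset.insert_eq]
        · rw [Finsupp.support_single_ne_zero a hb]; simpa using haf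
      rw [show (AddMonoidAlgebra.single a b + f).coeff.support = (AddMonoidAlgebra.single a b + f).coeff.support from rfl,
        hsupp] at hf
      refine Ideal.add_mem _ ?_ (ih fun c hc => hf c (Finset.mem_insert_of_mem hc))
      obtain ⟨i, hi, hne⟩ := hf a (Finset.mem_insert_self a _)
      have key : (a.1 - Finsupp.single i 1, a.2) + (Finsupp.single i 1, (0 : Y →₀ ℤ)) = a := by
        have h1 : (a.1 - Finsupp.single i 1) + Finsupp.single i 1 = a.1 :=
          tsub_add_cancel_of_le (Finsupp.single_le_iff.2 (Nat.one_le_iff_ne_zero.2 hne))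
        have : ((a.1 - Finsupp.single i 1, a.2) + (Finsupp.single i 1, (0 : Y →₀ ℤ)))
            = ((a.1 - Finsupp.single i 1) + Finsupp.single i 1, a.2 + 0) := rfl
        rw [this, h1, add_zero]
      have hsing : AddMonoidAlgebra.single a b
          = AddMonoidAlgebra.single (a.1 - Finsupp.single i 1, a.2) b * xvarK k i := by
        rw [xvarK, AddMonoidAlgebra.single_mul_single, mul_one, key]
      rw [hsing]
      exact Ideal.mul_mem_left _ _ (Ideal.subset_span ⟨i, hi, rfl⟩)

/-- Any element of `ℚ[x,y^±]` becomes integral after clearing denominators. -/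
lemma clear_denoms (r : LaurRing ℚ X Y) :
    ∃ n : ℤ, n ≠ 0 ∧ ∃ r' : LaurRing ℤ X Y, baseChange ℚ X Y r' = n • r := by
  induction r using AddMonoidAlgebra.induction with
  | zero => exact ⟨1, one_ne_zero, 0, by simp⟩
  | single_add a b f _ _ ih =>
    obtain ⟨n, hn, r', hr'⟩ := ih
    refine ⟨n * b.den, mul_ne_zero hn (Int.natCast_ne_zero.2 b.den_nz), 
      (b.den : ℤ) • r' + n • AddMonoidAlgebra.single a b.num, ?_⟩
    have hden : (b.den : ℤ) • (AddMonoidAlgebra.single a b : LaurRing ℚ X Y)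
        = AddMonoidAlgebra.single a ((b.num : ℚ)) := by
      rw [show (AddMonoidAlgebra.single a b : LaurRing ℚ X Y) = AddMonoidAlgebra.single a b from rfl,
        AddMonoidAlgebra.smul_single]
      congr 1
      rw [zsmul_eq_mul]
      push_cast
      rw [mul_comm, Rat.mul_den_eq_num]
    rw [map_add, map_zsmul, map_zsmul, hr', baseChange_single', smul_add, ← hden,
      smul_smul, smul_smul, mul_comm ((b.den : ℤ)) n, add_comm]

/-- Any element of `ℚI` is, up to a nonzero integer multiple, the image of an element of `I`. -/
lemma ratSurj (I : Ideal (LaurRing ℤ X Y)) (g : LaurRing ℚ X Y)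
    (hg : g ∈ Ideal.map (baseChange ℚ X Y).toRingHom I) :
    ∃ n : ℤ, n ≠ 0 ∧ ∃ a ∈ I, baseChange ℚ X Y a = n • g := by
  rw [Ideal.map] at hg
  induction hg using Submodule.span_induction with
  | mem g hg =>
    obtain ⟨a, ha, rfl⟩ := hg
    exact ⟨1, one_ne_zero, a, ha, by simp⟩
  | zero => exact ⟨1, one_ne_zero, 0, I.zero_mem, by simp⟩
  | add g h _ _ ihg ihh =>
    obtain ⟨n1, hn1, a1, ha1, hfa1⟩ := ihg
    obtain ⟨n2, hn2, a2, ha2, hfa2⟩ := ihh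
    refine ⟨n1 * n2, mul_ne_zero hn1 hn2, n2 • a1 + n1 • a2,
      I.add_mem (Submodule.smul_of_tower_mem I n2 ha1) (Submodule.smul_of_tower_mem I n1 ha2), ?_⟩
    rw [map_add, map_zsmul, map_zsmul, hfa1, hfa2, smul_add, smul_smul, smul_smul, mul_comm n2 n1]
  | smul r g _ ihg =>
    obtain ⟨n, hn, a, ha, hfa⟩ := ihg
    obtain ⟨m, hm, r', hr'⟩ := clear_denoms r
    refine ⟨m * n, mul_ne_zero hm hn, r' * a, I.mul_mem_left r' ha, ?_⟩
    rw [map_mul, hfa, hr', smul_eq_mul, smul_mul_smul_comm, mul_smul]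

end Aux

/-- Let `R = ℤ[x₁,…,x_r, y₁^{±},…,y_{n−r}^{±}]` and `I ⊆ R` an ideal
with `R/I` flat (= torsion-free) over `ℤ`. If the extension `ℚI` of `I` to
`ℚ[x, y^{±}]` is generated by a subset `S` of the `x`-variables, then `I` contains the
variables in `S`; and if moreover for every prime `p` the ideal `I·𝔽_p[x, y^{±}]` is
also generated by a set of `x`-variables of the same cardinality as `S`, then
`I = (S)`. -/
theorem stmt17 {X Y : Type*} [Fintype X]
    (I : Ideal (LaurRing ℤ X Y))
    (hflat : ∀ (m : ℤ) (x : LaurRing ℤ X Y ⧸ I), m ≠ 0 → m • x = 0 → x = 0)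
    (S : Finset X)
    (hQ : Ideal.map (baseChange ℚ X Y).toRingHom I =
      Ideal.span ((fun i => xvarK ℚ i) '' ↑S)) :
    (∀ i ∈ S, xvarK ℤ i ∈ I) ∧
      ((∀ p : ℕ, p.Prime → ∃ T : Finset X, T.card = S.card ∧
          Ideal.map (baseChange (ZMod p) X Y).toRingHom I =
            Ideal.span ((fun i => xvarK (ZMod p) i) '' ↑T)) →
        I = Ideal.span ((fun i => xvarK ℤ i) '' ↑S)) := by
  have h1 : ∀ i ∈ S, xvarK ℤ i ∈ I := by
    intro i hi
    have hx : xvarK ℚ i ∈ Ideal.map (baseChange ℚ X Y).toRingHom I := by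
      rw [hQ]; exact Ideal.subset_span ⟨i, hi, rfl⟩
    obtain ⟨n, hn, a, haI, hfa⟩ := ratSurj I _ hx
    have hae : a = n • xvarK ℤ i := by
      apply baseChange_injective'
      rw [map_zsmul, baseChange_xvar', hfa]
    have hq : n • (Ideal.Quotient.mk I (xvarK ℤ i)) = 0 := by
      rw [← map_zsmul, ← hae]
      exact Ideal.Quotient.eq_zero_iff_mem.2 haI
    exact Ideal.Quotient.eq_zero_iff_mem.1 (hflat n _ hn hq)
  refine ⟨h1, fun _ => le_antisymm ?_ ?_⟩
  · intro f hf
    have h2 : baseChange ℚ X Y f ∈ Ideal.span ((fun i => xvarK ℚ i) '' ↑S) := by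
      rw [← hQ]; exact Ideal.mem_map_of_mem _ hf
    rw [memJ_iff] at h2
    refine (memJ_iff S f).2 fun a ha => h2 a ?_
    rw [support_baseChange']
    exact ha
  · rw [Ideal.span_le]
    rintro g ⟨i, hi, rfl⟩
    exact h1 i hi


end
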